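/- arXiv:2112.10251 — 2 statements merged into one kernel-verified Lean document; each statement's English description precedes it below -/
import Mathlib

section
/- For every integer t > 0, the trend component Tr_t of SSDNet is bounded: Tr_t ∈ [-(t+1)·(1/2), (t+1)·(1/2)], and the seasonality component S_t of SSDNet is bounded: S_t ∈ [-(s-1+t)·(1/2), (s-1+t)·(1/2)]. -/
/-- Theorem 1 of the paper (SSDNet): for every integer `t > 0`, the trend
component `Tr t` lies in `[-(t+1)/2, (t+1)/2]` and the seasonality component
`S t` lies in `[-(s-1+t)/2, (s-1+t)/2]`. -/
theorem ssdnet_trend_and_seasonality_bounds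
    (s : ℕ) (hs : 2 ≤ s)
    (Tr : ℕ → ℝ) (c1 : ℕ → ℝ)
    (S : ℤ → ℝ) (c2 : ℤ → ℝ)
    (hTr : ∀ t : ℕ, 1 ≤ t → Tr t = Tr (t - 1) + c1 t)
    (hc1 : ∀ t : ℕ, 1 ≤ t → |c1 t| ≤ 1 / 2)
    (hTr0 : |Tr 0| ≤ 1 / 2)
    (hS : ∀ t : ℤ, 1 ≤ t → S t = -(∑ j ∈ Finset.Icc 1 (s - 1), S (t - (j : ℤ))) + c2 t)
    (hc2 : ∀ t : ℤ, 1 ≤ t → |c2 t| ≤ 1 / 2)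
    (hS0 : ∀ j : ℤ, 1 - (s : ℤ) ≤ j → j ≤ 0 → |S j| ≤ 1 / 2) :
    ∀ t : ℕ, 0 < t →
      Tr t ∈ Set.Icc (-(((t : ℝ) + 1) * (1 / 2))) (((t : ℝ) + 1) * (1 / 2)) ∧
      S (t : ℤ) ∈ Set.Icc (-(((s : ℝ) - 1 + (t : ℝ)) * (1 / 2)))
        (((s : ℝ) - 1 + (t : ℝ)) * (1 / 2)) := by
  -- Trend bound
  have trend : ∀ t : ℕ, |Tr t| ≤ ((t : ℝ) + 1) / 2 := by
    intro t
    induction t with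
    | zero => simpa using hTr0.trans (by norm_num)
    | succ n ih =>
      have h1 := hTr (n + 1) (by omega)
      simp only [Nat.add_sub_cancel] at h1
      rw [h1]
      calc |Tr n + c1 (n + 1)| ≤ |Tr n| + |c1 (n + 1)| := abs_add_le _ _
        _ ≤ ((n : ℝ) + 1) / 2 + 1 / 2 := add_le_add ih (hc1 _ (by omega))
        _ = (((n + 1 : ℕ) : ℝ) + 1) / 2 := by push_cast; ring
  -- Seasonality preliminaries
  have hins : Finset.Icc 0 (s - 1) = insert 0 (Finset.Icc 1 (s - 1)) := by
    ext j; simp only [Finset.mem_Icc, Finset.mem_insert]; omega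
  have hA : ∀ T : ℤ, 1 ≤ T →
      ∑ j ∈ Finset.Icc 0 (s - 1), S (T - (j : ℤ)) = c2 T := by
    intro T hT
    rw [hins, Finset.sum_insert (by simp)]
    simp only [Nat.cast_zero, sub_zero]
    rw [hS T hT]; ring
  have hshift : ∀ T : ℤ,
      ∑ j ∈ Finset.Icc 0 (s - 1), S (T - 1 - (j : ℤ)) =
      ∑ j ∈ Finset.Icc 1 s, S (T - (j : ℤ)) := by
    intro T
    apply Finset.sum_nbij' (fun j => j + 1) (fun j => j - 1)
    · intro a ha; simp only [Finset.mem_Icc] at *; omega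
    · intro a ha; simp only [Finset.mem_Icc] at *; omega
    · intro a ha; omega
    · intro a ha; simp only [Finset.mem_Icc] at ha; omega
    · intro a ha; congr 1; push_cast; ring
  have hrel : ∀ T : ℤ, 2 ≤ T → S T = S (T - s) + c2 T - c2 (T - 1) := by
    intro T hT
    have h1 := hA T (by omega)
    have h2 := hA (T - 1) (by omega)
    rw [hshift T] at h2
    have e1 : ∑ j ∈ Finset.Icc 0 (s - 1), S (T - (j : ℤ)) =
        S T + ∑ j ∈ Finset.Icc 1 (s - 1), S (T - (j : ℤ)) := by
      rw [hins, Finset.sum_insert (by simp)]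
      simp
    have hins2 : Finset.Icc 1 s = insert s (Finset.Icc 1 (s - 1)) := by
      ext j; simp only [Finset.mem_Icc, Finset.mem_insert]; omega
    have e2 : ∑ j ∈ Finset.Icc 1 s, S (T - (j : ℤ)) =
        S (T - s) + ∑ j ∈ Finset.Icc 1 (s - 1), S (T - (j : ℤ)) := by
      rw [hins2, Finset.sum_insert (by simp; omega)]
    rw [e1] at h1; rw [e2] at h2
    linarith
  have hsR : (2 : ℝ) ≤ (s : ℝ) := by exact_mod_cast hs
  -- Seasonality bound
  have season : ∀ t : ℕ, 1 ≤ t → |S (t : ℤ)| ≤ ((s : ℝ) - 1 + (t : ℝ)) / 2 := by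
    intro t
    induction t using Nat.strong_induction_on with
    | _ t ih =>
    intro ht
    rcases eq_or_lt_of_le ht with h1 | h2
    · -- t = 1
      have ht1 : t = 1 := h1.symm
      subst ht1
      have hb : |∑ j ∈ Finset.Icc 1 (s - 1), S (1 - (j : ℤ))| ≤ ((s : ℝ) - 1) * (1 / 2) := by
        calc |∑ j ∈ Finset.Icc 1 (s - 1), S (1 - (j : ℤ))|
            ≤ ∑ j ∈ Finset.Icc 1 (s - 1), |S (1 - (j : ℤ))| :=
              Finset.abs_sum_le_sum_abs _ _
          _ ≤ ∑ _j ∈ Finset.Icc 1 (s - 1), (1 / 2 : ℝ) := by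
              apply Finset.sum_le_sum
              intro j hj
              simp only [Finset.mem_Icc] at hj
              exact hS0 _ (by omega) (by omega)
          _ = ((s : ℝ) - 1) * (1 / 2) := by
              rw [Finset.sum_const, Nat.card_Icc, nsmul_eq_mul]
              have : s - 1 + 1 - 1 = s - 1 := by omega
              rw [this, Nat.cast_sub (by omega)]
              norm_num
      have h3 := abs_le.mp hb
      have h4 := abs_le.mp (hc2 1 le_rfl)
      have hrec := hS 1 le_rfl
      rw [abs_le]
      push_cast
      rw [hrec]
      constructor <;> nlinarith
    · -- t ≥ 2
      have ht2 : (2 : ℤ) ≤ (t : ℤ) := by exact_mod_cast h2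
      have hrel' := hrel (t : ℤ) ht2
      have h4 := abs_le.mp (hc2 t (by omega))
      have h5 := abs_le.mp (hc2 ((t : ℤ) - 1) (by omega))
      have htR : (2 : ℝ) ≤ (t : ℝ) := by exact_mod_cast h2
      by_cases hts : t ≤ s
      · have hb := abs_le.mp (hS0 ((t : ℤ) - s) (by omega) (by omega))
        rw [abs_le, hrel']
        constructor <;> nlinarith
      · have hst : s < t := by omega
        have ihh := ih (t - s) (by omega) (by omega)
        have hcast : ((t - s : ℕ) : ℤ) = (t : ℤ) - s := by omega
        have hcastR : ((t - s : ℕ) : ℝ) = (t : ℝ) - s := by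
          rw [Nat.cast_sub hst.le]
        rw [hcast, hcastR] at ihh
        have h6 := abs_le.mp ihh
        rw [abs_le, hrel']
        constructor <;> nlinarith
  -- Conclusion
  intro t ht
  refine ⟨?_, ?_⟩
  · have h := abs_le.mp (trend t)
    constructor <;> [nlinarith [h.1]; nlinarith [h.2]]
  · have h := abs_le.mp (season t ht)
    constructor <;> [nlinarith [h.1]; nlinarith [h.2]]
end

section
/- For every integer t ≥ 1, the seasonality component satisfies |S_t| ≤ (s-1+t)/2; equivalently S_t ∈ [-(s-1+t)·(1/2), (s-1+t)·(1/2)]. -/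
/-- Seasonality part of Theorem 1 of the paper (SSDNet): for every integer
`t ≥ 1`, the seasonality component satisfies `|S t| ≤ (s - 1 + t)/2`. -/
theorem ssdnet_seasonality_bound
    (s : ℕ) (hs : 2 ≤ s)
    (S : ℤ → ℝ) (c2 : ℤ → ℝ)
    (hS : ∀ t : ℤ, 1 ≤ t → S t = -(∑ j ∈ Finset.Icc 1 (s - 1), S (t - (j : ℤ))) + c2 t)
    (hc2 : ∀ t : ℤ, 1 ≤ t → |c2 t| ≤ 1 / 2)
    (hS0 : ∀ j : ℤ, 1 - (s : ℤ) ≤ j → j ≤ 0 → |S j| ≤ 1 / 2) :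
    ∀ t : ℤ, 1 ≤ t → |S t| ≤ ((s : ℝ) - 1 + (t : ℝ)) / 2 := by
  set n := s - 1 with hn
  have hn1 : 1 ≤ n := by omega
  have hcast : ((n : ℤ)) = (s : ℤ) - 1 := by omega
  -- key recurrence: for t ≥ 2, S t = S (t - s) + c2 t - c2 (t-1)
  have key : ∀ t : ℤ, 2 ≤ t → S t = S (t - s) + c2 t - c2 (t - 1) := by
    intro t ht
    have h1 := hS t (by omega)
    have h2 := hS (t - 1) (by omega)
    have e1 : ∑ j ∈ Finset.Icc 1 n, S (t - (j : ℤ))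
        = ∑ i ∈ Finset.range n, S (t - 1 - (i : ℤ)) := by
      rw [← Finset.Ico_add_one_right_eq_Icc, Finset.sum_Ico_eq_sum_range]
      apply Finset.sum_congr (by norm_num)
      intro i _
      congr 1
      push_cast
      ring
    have e2 : ∑ j ∈ Finset.Icc 1 n, S (t - 1 - (j : ℤ))
        = ∑ i ∈ Finset.range n, S (t - 1 - ((i : ℤ) + 1)) := by
      rw [← Finset.Ico_add_one_right_eq_Icc, Finset.sum_Ico_eq_sum_range]
      apply Finset.sum_congr (by norm_num)
      intro i _
      congr 1
      push_cast
      ring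
    have tele : ∑ i ∈ Finset.range n, S (t - 1 - ((i : ℤ) + 1))
        = ∑ i ∈ Finset.range n, S (t - 1 - (i : ℤ)) + S (t - 1 - n) - S (t - 1) := by
      have h3 := Finset.sum_range_succ (fun i : ℕ => S (t - 1 - (i : ℤ))) n
      have h4 := Finset.sum_range_succ' (fun i : ℕ => S (t - 1 - (i : ℤ))) n
      norm_num at h3 h4
      linarith [h3, h4.symm]
    have hts : t - 1 - (n : ℤ) = t - s := by omega
    rw [e1] at h1
    rw [e2, tele, hts] at h2
    linarith
  have habs : ∀ t : ℤ, 2 ≤ t → |S t| ≤ |S (t - s)| + 1 := by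
    intro t ht
    rw [key t ht]
    have := hc2 t (by omega)
    have := hc2 (t - 1) (by omega)
    calc |S (t - s) + c2 t - c2 (t - 1)| ≤ |S (t - s) + c2 t| + |c2 (t-1)| := abs_sub _ _
      _ ≤ |S (t - s)| + |c2 t| + |c2 (t-1)| := by linarith [abs_add_le (S (t - (s:ℤ))) (c2 t)]
      _ ≤ |S (t - s)| + 1 := by linarith
  -- base case t = 1
  have base : |S 1| ≤ ((s : ℝ) - 1 + 1) / 2 := by
    rw [hS 1 le_rfl]
    have hsum : |∑ j ∈ Finset.Icc 1 n, S (1 - (j : ℤ))| ≤ (n : ℝ) * (1/2) := by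
      calc |∑ j ∈ Finset.Icc 1 n, S (1 - (j : ℤ))|
          ≤ ∑ j ∈ Finset.Icc 1 n, |S (1 - (j : ℤ))| := Finset.abs_sum_le_sum_abs _ _
        _ ≤ ∑ j ∈ Finset.Icc 1 n, (1/2 : ℝ) := by
            apply Finset.sum_le_sum
            intro j hj
            simp only [Finset.mem_Icc] at hj
            exact hS0 _ (by omega) (by omega)
        _ = (n : ℝ) * (1/2) := by
            rw [Finset.sum_const, Nat.card_Icc]
            simp
      
    have hc := hc2 1 le_rfl
    have hncast : (n : ℝ) = (s : ℝ) - 1 := by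
      rw [hn, Nat.cast_sub (by omega)]
      norm_num
    calc |-(∑ j ∈ Finset.Icc 1 n, S (1 - (j:ℤ))) + c2 1|
        ≤ |∑ j ∈ Finset.Icc 1 n, S (1 - (j:ℤ))| + |c2 1| := by
          simpa [abs_neg] using abs_add_le (-(∑ j ∈ Finset.Icc 1 n, S (1 - (j:ℤ)))) (c2 1)
      _ ≤ (n : ℝ) * (1/2) + 1/2 := by linarith
      _ ≤ ((s : ℝ) - 1 + 1) / 2 := by rw [hncast]; ring_nf; linarith
  -- strong induction
  have main : ∀ k : ℕ, ∀ t : ℤ, 1 ≤ t → t.toNat ≤ k → |S t| ≤ ((s : ℝ) - 1 + (t : ℝ)) / 2 := by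
    intro k
    induction k using Nat.strong_induction_on with
    | _ k ih =>
      intro t ht htk
      rcases eq_or_lt_of_le ht with h1 | h2
      · rw [← h1]; exact_mod_cast base
      · have ht2 : 2 ≤ t := h2
        have hb := habs t ht2
        have hts : (2:ℝ) ≤ (t:ℝ) := by exact_mod_cast ht2
        have hsr : (2:ℝ) ≤ (s:ℝ) := by exact_mod_cast hs
        by_cases hc : 1 ≤ t - s
        · have hlt : (t - s).toNat < k := by omega
          have ihv := ih _ hlt (t - s) hc le_rfl
          have : ((s:ℝ) - 1 + ((t - s : ℤ) : ℝ)) / 2 = ((t:ℝ) - 1) / 2 := by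
            push_cast; ring
          rw [this] at ihv
          linarith
        · have h0 : |S (t - s)| ≤ 1/2 := hS0 _ (by omega) (by omega)
          linarith
  intro t ht
  exact main t.toNat t ht le_rfl
end
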